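/- For every integer k ≥ 2, the apex extension of a pseudo k-metric space is a pseudo (k+1)-metric space: if (X, d) is a pseudo k-metric space, a ∉ X, and (X′, d′) is the apex extension of (X, d) with apex a, then (X′, d′) satisfies nonnegativity, vanishing on non-distinct tuples, permutation invariance, and the simplex inequality for (k+1)-tuples. -/

import Mathlib

open scoped BigOperators

/-- An alternating real-valued function on `j`-tuples of `X`
(a `(j-1)`-dimensional chain on the complete complex on `X`). -/
def AltChain {X : Type*} {j : ℕ} (α : (Fin j → X) → ℝ) : Prop :=
  ∀ (π : Equiv.Perm (Fin j)) (x : Fin j → X),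
    α (x ∘ π) = ((Equiv.Perm.sign π : ℤ) : ℝ) * α x

/-- The boundary operator: `(∂α)(y₁,…,y_j) = ∑_{x ∈ X} α(x, y₁, …, y_j)`. -/
noncomputable def bdry {X : Type*} [Fintype X] {j : ℕ}
    (α : (Fin (j + 1) → X) → ℝ) : (Fin j → X) → ℝ :=
  fun y => ∑ x : X, α (Fin.cons x y)

/-- The elementary chain `1_t`: value `sign π` on the reordering of `t` by `π`,
and `0` on all other tuples. -/
noncomputable def unitChain {X : Type*} [DecidableEq X] {j : ℕ} (t : Fin j → X) :
    (Fin j → X) → ℝ :=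
  fun s => ∑ π : Equiv.Perm (Fin j),
    if s = t ∘ π then ((Equiv.Perm.sign π : ℤ) : ℝ) else 0

/-- The coboundary operator:
`(δf)(x₁,…,x_{j+2}) = ∑ᵢ (-1)^(i+1) f(x₁,…,x̂ᵢ,…,x_{j+2})` (`0`-indexed sign `(-1)^i`). -/
noncomputable def cobdry {X : Type*} {j : ℕ}
    (f : (Fin (j + 1) → X) → ℝ) : (Fin (j + 2) → X) → ℝ :=
  fun x => ∑ i : Fin (j + 2), (-1 : ℝ) ^ (i : ℕ) * f (x ∘ i.succAbove)

/-- A pseudo metric of arity `K` (a pseudo `K`-metric): nonnegative, vanishing on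
non-injective tuples, permutation invariant, satisfying the simplex inequality. -/
structure IsPseudoMetric {X : Type*} (K : ℕ) (d : (Fin K → X) → ℝ) : Prop where
  nonneg : ∀ x, 0 ≤ d x
  eq_zero : ∀ x, ¬ Function.Injective x → d x = 0
  perm : ∀ (π : Equiv.Perm (Fin K)) (x), d (x ∘ π) = d x
  simplex : ∀ (x : Fin K → X) (y : X),
    d x ≤ ∑ i : Fin K, d (Function.update x i y)

/-- A strong pseudo metric of arity `k + 1` (a strong pseudo `(k+1)`-metric).
The strong simplex inequality `d t ≤ ∑_τ |α(τ)| * d(τ)` (with the sum over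
`(k+1)`-element subsets `τ` of `X`, each evaluated on any fixed ordering of `τ`)
is stated in the equivalent form `(k+1)! * d t ≤ ∑_s |α(s)| * d(s)` with the sum
over all `(k+1)`-tuples `s`: since `α` is alternating and `d` is permutation
invariant, the summand depends only on the underlying set of `s` (it vanishes on
tuples with repeated entries), and each `(k+1)`-element subset has exactly
`(k+1)!` orderings. -/
structure IsStrongPseudoMetric {X : Type*} [Fintype X] [DecidableEq X] (k : ℕ)
    (d : (Fin (k + 1) → X) → ℝ) : Prop where
  nonneg : ∀ x, 0 ≤ d x
  eq_zero : ∀ x, ¬ Function.Injective x → d x = 0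
  perm : ∀ (π : Equiv.Perm (Fin (k + 1))) (x), d (x ∘ π) = d x
  strong_simplex : ∀ t : Fin (k + 1) → X, Function.Injective t →
    ∀ α : (Fin (k + 1) → X) → ℝ, AltChain α → bdry α = bdry (unitChain t) →
      ((k + 1).factorial : ℝ) * d t ≤ ∑ s : Fin (k + 1) → X, |α s| * d s

/-- `(X, d)` is a coboundary metric of arity `k + 2` in `m` dimensions with respect
to the norm `ν` on `ℝ^m`: there are chains `f 1, …, f m` on `(k+1)`-tuples (i.e.
`(k+2)-2`-dimensional chains for arity `k+2`) whose simultaneous coboundary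
realizes `d` on injective tuples, and `d` vanishes on non-injective tuples. -/
def IsCoboundaryMetric {X : Type*} (k m : ℕ) (ν : (Fin m → ℝ) → ℝ)
    (d : (Fin (k + 2) → X) → ℝ) : Prop :=
  ∃ f : Fin m → ((Fin (k + 1) → X) → ℝ),
    (∀ i, AltChain (f i)) ∧
    (∀ x, Function.Injective x → d x = ν (fun i => cobdry (f i) x)) ∧
    (∀ x, ¬ Function.Injective x → d x = 0)

/-- `ν` is a norm on `ℝ^m`. -/
structure IsNorm {m : ℕ} (ν : (Fin m → ℝ) → ℝ) : Prop where
  nonneg : ∀ x, 0 ≤ ν x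
  eq_zero_iff : ∀ x, ν x = 0 ↔ x = 0
  homog : ∀ (c : ℝ) (x), ν (c • x) = |c| * ν x
  triangle : ∀ x y, ν (x + y) ≤ ν x + ν y

/-- The `ℓ_p` norm on `ℝ^m` for real `p`. -/
noncomputable def lpNorm (p : ℝ) {m : ℕ} (x : Fin m → ℝ) : ℝ :=
  (∑ i, |x i| ^ p) ^ (1 / p)

/-- The `ℓ_1` norm on `ℝ^m`. -/
noncomputable def l1Norm {m : ℕ} (x : Fin m → ℝ) : ℝ := ∑ i, |x i|

/-- The `ℓ_2` (Euclidean) norm on `ℝ^m`. -/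
noncomputable def l2Norm {m : ℕ} (x : Fin m → ℝ) : ℝ := Real.sqrt (∑ i, x i ^ 2)

/-- The `ℓ_∞` norm on `ℝ^m` (the sup norm, which is the norm of `Fin m → ℝ`). -/
noncomputable def linfNorm {m : ℕ} (x : Fin m → ℝ) : ℝ := ‖x‖

/- The apex extension of `d` (of arity `K`), with the apex being
`none : Option X` (a new element not in `X`): on an injective `(K+1)`-tuple
containing the apex in position `i` it is `d` of the tuple with position `i`
removed, and it is `0` on all other tuples. -/
open Classical in
noncomputable def apexExt {X : Type*} {K : ℕ} (d : (Fin K → X) → ℝ) :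
    (Fin (K + 1) → Option X) → ℝ := fun x =>
  if h : Function.Injective x ∧ ∃ i, x i = none then
    d (fun j =>
      Option.get (x ((Classical.choose h.2).succAbove j))
        (by
          rw [Option.isSome_iff_ne_none]
          intro hnone
          exact Fin.succAbove_ne (Classical.choose h.2) j
            (h.1 (hnone.trans (Classical.choose_spec h.2).symm))))
  else 0

/-- The `K`-dimensional volume of the simplex with vertices `y 0, …, y K` in `ℝ^m`:
`(1/K!) * √(det (AᵀA))` where `A` is the `m × K` matrix with columns
`y i - y 0`, `i = 1, …, K`. -/
noncomputable def simplexVolume {m K : ℕ} (y : Fin (K + 1) → (Fin m → ℝ)) : ℝ :=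
  (1 / (K.factorial : ℝ)) *
    Real.sqrt
      (Matrix.det
        (Matrix.of fun i j : Fin K =>
          ∑ l : Fin m, (y i.succ l - y 0 l) * (y j.succ l - y 0 l)))


section ApexAux

variable {X : Type*} {K : ℕ}

noncomputable def reduceAt (x : Fin (K + 1) → Option X)
    (hx : Function.Injective x) (i₀ : Fin (K + 1)) (h0 : x i₀ = none) : Fin K → X :=
  fun j => (x (i₀.succAbove j)).get (by
    rw [Option.isSome_iff_ne_none]
    intro hn
    exact Fin.succAbove_ne i₀ j (hx (hn.trans h0.symm)))

lemma apexExt_nonneg' (d : (Fin K → X) → ℝ) (hd : ∀ x, 0 ≤ d x)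
    (x : Fin (K + 1) → Option X) : 0 ≤ apexExt d x := by
  unfold apexExt
  split
  · exact hd _
  · exact le_refl 0

lemma apexExt_eq (d : (Fin K → X) → ℝ) (x : Fin (K + 1) → Option X)
    (hx : Function.Injective x) (i₀ : Fin (K + 1)) (h0 : x i₀ = none) :
    apexExt d x = d (reduceAt x hx i₀ h0) := by
  have h : Function.Injective x ∧ ∃ i, x i = none := ⟨hx, i₀, h0⟩
  have hc : Classical.choose h.2 = i₀ := hx ((Classical.choose_spec h.2).trans h0.symm)
  rw [apexExt, dif_pos h]
  congr 1
  funext j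
  apply Option.some_injective
  rw [Option.some_get, reduceAt, Option.some_get, hc]

lemma reduceAt_injective (x : Fin (K + 1) → Option X)
    (hx : Function.Injective x) (i₀ : Fin (K + 1)) (h0 : x i₀ = none) :
    Function.Injective (reduceAt x hx i₀ h0) := by
  intro a b hab
  have h2 := congrArg some hab
  simp only [reduceAt, Option.some_get] at h2
  exact Fin.succAbove_right_injective (hx h2)

lemma range_reduceAt (x : Fin (K + 1) → Option X)
    (hx : Function.Injective x) (i₀ : Fin (K + 1)) (h0 : x i₀ = none) :
    Set.range (reduceAt x hx i₀ h0) = {v | some v ∈ Set.range x} := by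
  ext v
  constructor
  · rintro ⟨j, rfl⟩
    exact ⟨i₀.succAbove j, (Option.some_get _).symm⟩
  · rintro ⟨i, hi⟩
    have hne : i ≠ i₀ := fun h => by rw [h, h0] at hi; exact Option.some_ne_none v hi.symm
    obtain ⟨j, rfl⟩ := Fin.exists_succAbove_eq hne
    refine ⟨j, ?_⟩
    apply Option.some_injective
    rw [reduceAt, Option.some_get, hi]

lemma perm_of_range_eq {d : (Fin K → X) → ℝ}
    (hperm : ∀ (π : Equiv.Perm (Fin K)) (x), d (x ∘ π) = d x)
    {s t : Fin K → X} (hs : Function.Injective s) (ht : Function.Injective t)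
    (h : Set.range s = Set.range t) : d s = d t := by
  let e : Fin K ≃ Fin K :=
    (Equiv.ofInjective s hs).trans ((Equiv.setCongr h).trans (Equiv.ofInjective t ht).symm)
  have he : t ∘ e = s := by
    funext j
    show t ((Equiv.ofInjective t ht).symm (Equiv.setCongr h (Equiv.ofInjective s hs j))) = s j
    rw [Equiv.apply_ofInjective_symm ht]
    rfl
  rw [← he, hperm e t]

end ApexAux

/-- for every `k ≥ 2` (arity `k + 2`), the apex extension of a pseudo
metric is a pseudo metric of one higher arity. -/
theorem stmt_4 (k : ℕ) {X : Type*} [Fintype X] (d : (Fin (k + 2) → X) → ℝ)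
    (hd : IsPseudoMetric (k + 2) d) :
    IsPseudoMetric (k + 3) (apexExt d) := by
  classical
  obtain ⟨hnn, hz, hperm, hsimp⟩ := hd
  constructor
  · exact fun x => apexExt_nonneg' d hnn x
  · intro x hx
    rw [apexExt, dif_neg (fun h => hx h.1)]
  · intro π x
    by_cases h : Function.Injective x ∧ ∃ i, x i = none
    · obtain ⟨hx, i₀, h0⟩ := h
      have hxπ : Function.Injective (x ∘ π) := hx.comp π.injective
      have h0' : (x ∘ π) (π.symm i₀) = none := by simp [h0]
      rw [apexExt_eq d _ hxπ _ h0', apexExt_eq d x hx i₀ h0]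
      apply perm_of_range_eq hperm (reduceAt_injective _ _ _ _) (reduceAt_injective _ _ _ _)
      rw [range_reduceAt, range_reduceAt]
      rw [π.surjective.range_comp x]
    · have h' : ¬(Function.Injective (x ∘ π) ∧ ∃ i, (x ∘ π) i = none) := by
        rintro ⟨h1, i, hi⟩
        refine h ⟨?_, π i, hi⟩
        have hxeq : x = (x ∘ π) ∘ π.symm := by funext j; simp
        rw [hxeq]
        exact h1.comp π.symm.injective
      rw [apexExt, dif_neg h', apexExt, dif_neg h]
  · intro x y
    have hnn' : ∀ i, 0 ≤ apexExt d (Function.update x i y) :=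
      fun i => apexExt_nonneg' d hnn _
    by_cases h : Function.Injective x ∧ ∃ i, x i = none
    swap
    · rw [apexExt, dif_neg h]
      exact Finset.sum_nonneg fun i _ => hnn' i
    obtain ⟨hx, i₀, h0⟩ := h
    rw [apexExt_eq d x hx i₀ h0]
    by_cases hy : ∃ i, x i = y
    · obtain ⟨i, hi⟩ := hy
      have hupd : Function.update x i y = x := by
        funext j
        rw [Function.update_apply]
        split
        · next hj => rw [hj, hi]
        · rfl
      calc d (reduceAt x hx i₀ h0) = apexExt d (Function.update x i y) := by
            rw [hupd, apexExt_eq d x hx i₀ h0]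
        _ ≤ ∑ i, apexExt d (Function.update x i y) :=
            Finset.single_le_sum (fun i _ => hnn' i) (Finset.mem_univ i)
    · match y with
      | none => exact absurd ⟨i₀, h0⟩ hy
      | some b =>
        rw [Fin.sum_univ_succAbove (fun i => apexExt d (Function.update x i (some b))) i₀]
        have hz0 : apexExt d (Function.update x i₀ (some b)) = 0 := by
          rw [apexExt, dif_neg]
          rintro ⟨-, i, hi⟩
          rw [Function.update_apply] at hi
          split_ifs at hi with h1
          exact h1 (hx (hi.trans h0.symm))
        rw [hz0, zero_add]
        have key : ∀ j : Fin (k + 2),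
            apexExt d (Function.update x (i₀.succAbove j) (some b))
              = d (Function.update (reduceAt x hx i₀ h0) j b) := by
          intro j
          have hinj' : Function.Injective (Function.update x (i₀.succAbove j) (some b)) := by
            intro a c hac
            rw [Function.update_apply, Function.update_apply] at hac
            split_ifs at hac with h1 h2 h2
            · exact h1.trans h2.symm
            · exact absurd ⟨c, hac.symm⟩ hy
            · exact absurd ⟨a, hac⟩ hy
            · exact hx hac
          have h0' : Function.update x (i₀.succAbove j) (some b) i₀ = none := by
            rw [Function.update_of_ne (Fin.succAbove_ne i₀ j).symm]
            exact h0
          rw [apexExt_eq d _ hinj' i₀ h0']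
          congr 1
          funext j'
          apply Option.some_injective
          rw [reduceAt, Option.some_get, Function.update_apply, Function.update_apply]
          split_ifs with h1 h2 h2
          · rfl
          · exact absurd (Fin.succAbove_right_injective h1) h2
          · exact absurd (congrArg i₀.succAbove h2) h1
          · rw [reduceAt, Option.some_get]
        rw [Finset.sum_congr rfl (fun j _ => key j)]
        exact hsimp (reduceAt x hx i₀ h0) b
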